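/- arXiv:1701.07344 — 4 statements merged into one kernel-verified Lean document; each statement's English description precedes it below -/
import Mathlib

section
/- For N ≥ 3, each port impedance matrix T_n with nonzero off-diagonal coupling has exactly one positive eigenvalue, one negative eigenvalue, and N−2 zero eigenvalues; hence T_n is indefinite and singular. -/
open Matrix

/-- For `N ≥ 3`, each port impedance matrix `T_n` (with `R_n > 0` and nonzero
off-diagonal coupling in row `n`) has exactly one positive eigenvalue,
one negative eigenvalue, and `N − 2` zero eigenvalues. -/
theorem port_impedance_matrix_eigenvalue_signs
    {N : ℕ} (hN : 3 ≤ N) (ω : ℝ) (hω : ω ≠ 0)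
    (R L : Fin N → ℝ) (M : Matrix (Fin N) (Fin N) ℂ)
    (hMsymm : M.IsSymm) (hMdiag : ∀ i, M i i = 0)
    (n : Fin N) (hR : 0 < R n) (hMn : ∃ m, M n m ≠ 0)
    (Z : Matrix (Fin N) (Fin N) ℂ)
    (hZ : Z = Matrix.diagonal (fun i => (R i : ℂ))
        + (Complex.I * (ω : ℂ)) • Matrix.diagonal (fun i => (L i : ℂ))
        + (Complex.I * (ω : ℂ)) • M)
    (T : Matrix (Fin N) (Fin N) ℂ)
    (hT : T = (1 / 2 : ℂ) • (Matrix.single n n (1 : ℂ) * Z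
        + Zᴴ * Matrix.single n n (1 : ℂ)))
    (hTh : T.IsHermitian) :
    ∃ j k : Fin N, j ≠ k ∧ 0 < hTh.eigenvalues j ∧ hTh.eigenvalues k < 0 ∧
      ∀ m : Fin N, m ≠ j → m ≠ k → hTh.eigenvalues m = 0 := by
  classical
  obtain ⟨m, hm⟩ := hMn
  have hmn : m ≠ n := by
    intro h; subst h; exact hm (hMdiag m)
  -- entrywise formula for T
  have hTapp : ∀ i j, T i j =
      (1/2 : ℂ) * ((if i = n then Z n j else 0) + (if j = n then star (Z n i) else 0)) := by
    intro i j
    rw [hT]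
    simp only [Matrix.smul_apply, Matrix.add_apply, smul_eq_mul, one_div]
    congr 1
    congr 1
    · by_cases hi : i = n
      · subst hi
        rw [Matrix.single_mul_apply_same, one_mul, if_pos rfl]
      · rw [if_neg hi]; simp [Matrix.mul_apply, Matrix.single, Ne.symm hi]
    · by_cases hj : j = n
      · subst hj
        rw [Matrix.mul_single_apply_same, mul_one, if_pos rfl, conjTranspose_apply]
      · rw [if_neg hj]; simp [Matrix.mul_apply, Matrix.single, Ne.symm hj]
  have hZnn : Z n n = (R n : ℂ) + Complex.I * ω * L n := by
    rw [hZ]; simp [hMdiag n]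
  have hTnn : T n n = (R n : ℂ) := by
    rw [hTapp, if_pos rfl, if_pos rfl, hZnn]
    simp only [star_add, star_mul', Complex.star_def, Complex.conj_ofReal, _root_.map_mul, Complex.conj_I]
    ring
  have hZnm : Z n m = Complex.I * ω * M n m := by
    rw [hZ]; simp [Matrix.diagonal_apply_ne _ (Ne.symm hmn)]
  have hcval : T n m = (1/2 : ℂ) * (Complex.I * ω * M n m) := by
    rw [hTapp, if_pos rfl, if_neg hmn, hZnm]; ring
  have hc0 : T n m ≠ 0 := by
    rw [hcval]
    simp [Complex.I_ne_zero, hω, hm, Complex.ofReal_eq_zero]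
  have hT0 : ∀ i j, i ≠ n → j ≠ n → T i j = 0 := by
    intro i j hi hj; rw [hTapp, if_neg hi, if_neg hj]; ring
  -- trace
  have htrT : T.trace = (R n : ℂ) := by
    rw [Matrix.trace]
    rw [Finset.sum_eq_single n (fun i _ hi => by simpa [Matrix.diag] using hT0 i i hi hi)
      (fun h => absurd (Finset.mem_univ n) h)]
    simpa [Matrix.diag] using hTnn
  have htr : ∑ i, (hTh.eigenvalues i : ℂ) = T.trace := by
    conv_rhs => rw [hTh.spectral_theorem]
    rw [Unitary.conjStarAlgAut_apply, Matrix.trace_mul_cycle,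
      (Matrix.mem_unitaryGroup_iff').mp (Matrix.IsHermitian.eigenvectorUnitary hTh).2,
      one_mul, Matrix.trace_diagonal]
    simp
  have hsum : ∑ i, hTh.eigenvalues i = R n := by
    have h := htr.trans htrT
    exact_mod_cast h
  -- a positive eigenvalue exists
  have hexj : ∃ j, 0 < hTh.eigenvalues j := by
    by_contra h
    push_neg at h
    have hle : ∑ i, hTh.eigenvalues i ≤ 0 := Finset.sum_nonpos (fun i _ => h i)
    rw [hsum] at hle
    linarith
  -- sums over the pair {n, m}
  have pairsum : ∀ (f : Fin N → ℂ), (∀ i, i ≠ n → i ≠ m → f i = 0) →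
      ∑ i, f i = f n + f m := by
    intro f hf
    rw [← Finset.sum_subset (Finset.subset_univ ({n, m} : Finset (Fin N)))
      (fun x _ hx => hf x (fun h => hx (by simp [h])) (fun h => hx (by simp [h])))]
    exact Finset.sum_pair (Ne.symm hmn)
  -- a negative eigenvalue exists
  have hexk : ∃ k, hTh.eigenvalues k < 0 := by
    by_contra h
    push_neg at h
    have hps := hTh.posSemidef_iff_eigenvalues_nonneg.mpr (fun i => h i)
    have ha : ((R n : ℝ) : ℂ) ≠ 0 := Complex.ofReal_ne_zero.mpr hR.ne'
    set x : Fin N → ℂ := fun i => if i = n then -(T n m) / ((R n : ℝ) : ℂ) else if i = m then 1 else 0 with hx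
    have hTmn : T m n = star (T n m) := (hTh.apply m n).symm
    have hTx : ∀ i, (T *ᵥ x) i = T i n * (-(T n m) / ((R n : ℝ) : ℂ)) + T i m := by
      intro i
      show ∑ j, T i j * x j = _
      rw [pairsum (fun j => T i j * x j) (fun q hqn hqm => by simp [hx, hqn, hqm])]
      simp [hx, hmn]
    have hval : dotProduct (star x) (T *ᵥ x) = ((-(Complex.normSq (T n m) / R n) : ℝ) : ℂ) := by
      have hTx_n : (T *ᵥ x) n = 0 := by
        rw [hTx n, hTnn]
        field_simp
        ring
      have hTx_m : (T *ᵥ x) m = star (T n m) * (-(T n m) / ((R n : ℝ) : ℂ)) := by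
        rw [hTx m, hTmn, hT0 m m hmn hmn, add_zero]
      rw [dotProduct,
        pairsum _ (fun q hqn hqm => by simp [hx, hqn, hqm]),
        hTx_n, hTx_m]
      simp only [Pi.star_apply, hx, if_neg hmn, if_pos rfl, ite_true, star_one, one_mul,
        mul_zero, zero_add, star_zero]
      rw [Complex.star_def, Complex.ofReal_neg, Complex.ofReal_div,
        Complex.normSq_eq_conj_mul_self]
      field_simp
    have hnonneg := hps.re_dotProduct_nonneg x
    rw [hval] at hnonneg
    have hre : RCLike.re ((((-(Complex.normSq (T n m) / R n) : ℝ)) : ℂ)) =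
        -(Complex.normSq (T n m) / R n) := by
      simp
    rw [hre] at hnonneg
    have hpos : 0 < Complex.normSq (T n m) / R n :=
      div_pos (Complex.normSq_pos.mpr hc0) hR
    linarith
  obtain ⟨j, hjpos⟩ := hexj
  obtain ⟨k, hkneg⟩ := hexk
  have hjk : j ≠ k := by
    intro h; rw [h] at hjpos; linarith
  refine ⟨j, k, hjk, hjpos, hkneg, ?_⟩
  -- rank bound
  have hrank : T.rank ≤ 2 := by
    set C : Matrix (Fin N) (Fin 2) ℂ :=
      Matrix.of fun i k => if k = 0 then (if i = n then 1 else 0)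
        else (if i = n then 0 else T i n) with hC
    set D : Matrix (Fin 2) (Fin N) ℂ :=
      Matrix.of fun k j => if k = 0 then T n j else (if j = n then 1 else 0) with hD
    have hCD : T = C * D := by
      ext i j
      rw [Matrix.mul_apply, Fin.sum_univ_two]
      simp only [hC, hD, Matrix.of_apply]
      norm_num
      by_cases hi : i = n <;> by_cases hj : j = n <;>
        simp [hi, hj, hT0 i j]
    calc T.rank = (C * D).rank := by rw [← hCD]
      _ ≤ C.rank := Matrix.rank_mul_le_left C D
      _ ≤ Fintype.card (Fin 2) := Matrix.rank_le_card_width C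
      _ = 2 := by simp
  have hcard : (Finset.univ.filter fun i => hTh.eigenvalues i ≠ 0).card ≤ 2 := by
    have h := hTh.rank_eq_card_non_zero_eigs
    rw [Fintype.card_subtype] at h
    omega
  intro p hpj hpk
  by_contra hp0
  have hsub : ({j, k, p} : Finset (Fin N)) ⊆
      Finset.univ.filter (fun i => hTh.eigenvalues i ≠ 0) := by
    intro q hq
    simp only [Finset.mem_insert, Finset.mem_singleton] at hq
    rcases hq with h | h | h <;> subst h <;>
      simp [Finset.mem_filter, hjpos.ne', hkneg.ne, hp0]
  have h3 : ({j, k, p} : Finset (Fin N)).card = 3 := by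
    rw [Finset.card_insert_of_notMem (by simp [hjk, Ne.symm hpj]),
      Finset.card_insert_of_notMem (by simp [Ne.symm hpk]),
      Finset.card_singleton]
  have := Finset.card_le_card hsub
  omega
end

section
/- The nonzero eigenvalues of the port impedance matrix T_n are λ = (1/2)(R_n ± sqrt(S_n² + R_n²)), where S_n² = ω² ∑_m |M_{n,m}|²; in particular the positive eigenvalue exceeds R_n/2 and the negative eigenvalue is −(1/2)(sqrt(S_n²+R_n²) − R_n) < 0 whenever S_n > 0. -/
open Matrix

theorem aux_det_sub_smul_one {N : ℕ} {A : Matrix (Fin N) (Fin N) ℂ} (hA : A.IsHermitian)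
    (μ : ℝ) :
    (A - (μ : ℂ) • 1).det = ∏ i, ((hA.eigenvalues i : ℂ) - μ) := by
  set U : Matrix (Fin N) (Fin N) ℂ := (hA.eigenvectorUnitary : Matrix (Fin N) (Fin N) ℂ)
  have hUU : U * star U = 1 := Matrix.mem_unitaryGroup_iff.mp hA.eigenvectorUnitary.2
  have hUU' : star U * U = 1 := Matrix.mem_unitaryGroup_iff'.mp hA.eigenvectorUnitary.2
  have hspec : A = U * Matrix.diagonal (RCLike.ofReal ∘ hA.eigenvalues) * star U :=
    hA.spectral_theorem
  have hdiag : Matrix.diagonal (fun i => (hA.eigenvalues i : ℂ) - μ)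
      = Matrix.diagonal (RCLike.ofReal ∘ hA.eigenvalues) - (μ : ℂ) • 1 := by
    ext i j
    by_cases h : i = j <;>
      simp [Matrix.sub_apply, Matrix.smul_apply, Matrix.diagonal_apply, Matrix.one_apply, h]
  have hmid : U * ((μ : ℂ) • 1) * star U = (μ : ℂ) • 1 := by
    rw [Matrix.mul_smul, Matrix.mul_one, Matrix.smul_mul, hUU]
  have key : A - (μ : ℂ) • 1
      = U * (Matrix.diagonal (fun i => (hA.eigenvalues i : ℂ) - μ)) * star U := by
    rw [hdiag, Matrix.mul_sub, Matrix.sub_mul, ← hspec, hmid]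
  rw [key, Matrix.det_mul, Matrix.det_mul, mul_comm, ← mul_assoc, ← Matrix.det_mul, hUU']
  simp

/-- The nonzero eigenvalues of the port impedance matrix `T_n` are
`λ± = (1/2)(R_n ± √(S_n² + R_n²))` with `S_n² = ω² ∑ₘ |M_{n,m}|²`; in particular the
positive eigenvalue exceeds `R_n / 2` and the negative one is
`−(1/2)(√(S_n² + R_n²) − R_n) < 0` whenever `S_n > 0`. -/
theorem port_impedance_matrix_eigenvalue_values
    {N : ℕ} (ω : ℝ)
    (R L : Fin N → ℝ) (M : Matrix (Fin N) (Fin N) ℂ)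
    (hMsymm : M.IsSymm) (hMdiag : ∀ i, M i i = 0)
    (n : Fin N) (hR : 0 < R n)
    (S2 : ℝ) (hS2 : S2 = ω ^ 2 * ∑ m : Fin N, ‖M n m‖ ^ 2)
    (hS2pos : 0 < S2)
    (Z : Matrix (Fin N) (Fin N) ℂ)
    (hZ : Z = Matrix.diagonal (fun i => (R i : ℂ))
        + (Complex.I * (ω : ℂ)) • Matrix.diagonal (fun i => (L i : ℂ))
        + (Complex.I * (ω : ℂ)) • M)
    (T : Matrix (Fin N) (Fin N) ℂ)
    (hT : T = (1 / 2 : ℂ) • (Matrix.single n n (1 : ℂ) * Z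
        + Zᴴ * Matrix.single n n (1 : ℂ)))
    (hTh : T.IsHermitian)
    (lamPos lamNeg : ℝ)
    (hlp : lamPos = (1 / 2) * (R n + Real.sqrt (S2 + (R n) ^ 2)))
    (hln : lamNeg = (1 / 2) * (R n - Real.sqrt (S2 + (R n) ^ 2))) :
    (∀ m : Fin N, hTh.eigenvalues m ≠ 0 →
        hTh.eigenvalues m = lamPos ∨ hTh.eigenvalues m = lamNeg) ∧
    (∃ j, hTh.eigenvalues j = lamPos) ∧
    (∃ k, hTh.eigenvalues k = lamNeg) ∧
    R n / 2 < lamPos ∧ lamNeg < 0 := by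
  -- basic real facts
  have hRS : (0:ℝ) ≤ S2 + R n ^ 2 := by positivity
  have hsq : Real.sqrt (S2 + R n ^ 2) ^ 2 = S2 + R n ^ 2 := Real.sq_sqrt hRS
  have hsnn : 0 ≤ Real.sqrt (S2 + R n ^ 2) := Real.sqrt_nonneg _
  have hgt : R n < Real.sqrt (S2 + R n ^ 2) := by nlinarith
  have hpos_ineq : R n / 2 < lamPos := by rw [hlp]; linarith
  have hneg_ineq : lamNeg < 0 := by rw [hln]; linarith
  have hlpne : lamPos ≠ 0 := ne_of_gt (by linarith)
  have hlnne : lamNeg ≠ 0 := ne_of_lt hneg_ineq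
  have hsum : lamPos + lamNeg = R n := by rw [hlp, hln]; ring
  have hprod : lamPos * lamNeg = -(S2/4) := by
    rw [hlp, hln]; nlinarith [hsq]
  -- quadratic characterization
  have hquad : ∀ μ : ℝ, μ ^ 2 = R n * μ + S2 / 4 ↔ (μ = lamPos ∨ μ = lamNeg) := by
    intro μ
    constructor
    · intro h
      have hfac : (μ - lamPos) * (μ - lamNeg) = 0 := by
        have hexp : (μ - lamPos) * (μ - lamNeg)
            = μ ^ 2 - (lamPos + lamNeg) * μ + lamPos * lamNeg := by ring
        rw [hsum, hprod] at hexp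
        linarith
      rcases mul_eq_zero.1 hfac with h' | h'
      · exact Or.inl (by linarith)
      · exact Or.inr (by linarith)
    · rintro (rfl | rfl) <;> nlinarith [hsum, hprod]
  -- the off-diagonal data
  set t : Fin N → ℂ := fun j => Complex.I * (ω : ℂ) / 2 * M n j with ht
  have htn : t n = 0 := by simp [ht, hMdiag n]
  -- row n of Z
  have hZnn : Z n n = (R n : ℂ) + Complex.I * (ω : ℂ) * (L n : ℂ) := by
    simp [hZ, hMdiag n]
  have hZn : ∀ j, j ≠ n → Z n j = Complex.I * (ω : ℂ) * M n j := by
    intro j hj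
    simp [hZ, Matrix.diagonal_apply_ne _ (Ne.symm hj)]
  -- entries of T
  have hTE : ∀ i j, T i j =
      if i = n then (if j = n then (R n : ℂ) else t j)
      else (if j = n then (starRingEnd ℂ) (t i) else 0) := by
    intro i j
    rw [hT]
    by_cases hi : i = n <;> by_cases hj : j = n
    · rw [hi, hj, if_pos rfl, if_pos rfl]
      rw [Matrix.smul_apply, Matrix.add_apply, Matrix.single_mul_apply_same,
        Matrix.mul_single_apply_same, Matrix.conjTranspose_apply, hZnn]
      simp [Complex.ext_iff]
      ring
    · rw [hi, if_pos rfl, if_neg hj]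
      rw [Matrix.smul_apply, Matrix.add_apply, Matrix.single_mul_apply_same,
        Matrix.mul_single_apply_of_ne (1 : ℂ) n n n j hj, hZn j hj]
      simp only [ht, one_mul, add_zero, smul_eq_mul]
      ring
    · rw [hj, if_neg hi, if_pos rfl]
      rw [Matrix.smul_apply, Matrix.add_apply,
        Matrix.single_mul_apply_of_ne (1 : ℂ) n n i n hi,
        Matrix.mul_single_apply_same, Matrix.conjTranspose_apply, hZn i hi]
      simp only [ht, zero_add, mul_one, smul_eq_mul, Complex.star_def, _root_.map_mul,
        map_div₀, Complex.conj_I, Complex.conj_ofReal, map_ofNat]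
      ring
    · rw [if_neg hi, if_neg hj]
      rw [Matrix.smul_apply, Matrix.add_apply,
        Matrix.single_mul_apply_of_ne (1 : ℂ) n n i j hi,
        Matrix.mul_single_apply_of_ne (1 : ℂ) n n i j hj]
      simp
  -- mulVec formulas
  have hrow : ∀ (v : Fin N → ℂ) i, i ≠ n → (T *ᵥ v) i = (starRingEnd ℂ) (t i) * v n := by
    intro v i hi
    simp only [Matrix.mulVec, dotProduct]
    simp_rw [hTE i, if_neg hi]
    rw [Finset.sum_eq_single_of_mem n (Finset.mem_univ n)
      (fun b _ hb => by rw [if_neg hb, zero_mul])]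
    rw [if_pos rfl]
  have hrown : ∀ (v : Fin N → ℂ), (T *ᵥ v) n = (R n : ℂ) * v n + ∑ j, t j * v j := by
    intro v
    simp only [Matrix.mulVec, dotProduct]
    simp_rw [hTE n]
    rw [← Finset.add_sum_erase _ _ (Finset.mem_univ n)]
    simp only [if_pos rfl, ite_true]
    congr 1
    have hcong : ∑ j ∈ Finset.univ.erase n, (if j = n then (R n : ℂ) else t j) * v j
        = ∑ j ∈ Finset.univ.erase n, t j * v j :=
      Finset.sum_congr rfl fun j hj => by rw [if_neg (Finset.ne_of_mem_erase hj)]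
    rw [hcong]
    exact Finset.sum_erase _ (by rw [htn, zero_mul])
  -- the sum of |t j|^2
  have hts : ∑ j, t j * (starRingEnd ℂ) (t j) = ((S2 / 4 : ℝ) : ℂ) := by
    have habs : ∀ j, t j * (starRingEnd ℂ) (t j)
        = ((ω ^ 2 / 4 * ‖M n j‖ ^ 2 : ℝ) : ℂ) := by
      intro j
      rw [Complex.mul_conj]
      norm_cast
      rw [← Complex.sq_norm]
      simp only [ht, norm_mul, norm_div, Complex.norm_I, Complex.norm_real, Real.norm_eq_abs, Complex.norm_two]
      rw [mul_pow, div_pow, mul_pow, one_pow, sq_abs]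
      ring
    rw [Finset.sum_congr rfl fun j _ => habs j, ← Complex.ofReal_sum]
    congr 1
    rw [hS2, Finset.mul_sum, Finset.sum_div]
    exact Finset.sum_congr rfl fun j _ => by ring
  -- existence of eigenvalue for each root of the quadratic
  have hexists : ∀ μ : ℝ, μ ≠ 0 → μ ^ 2 = R n * μ + S2 / 4 →
      ∃ j, hTh.eigenvalues j = μ := by
    intro μ hμ0 hμq
    set w : Fin N → ℂ := fun i => if i = n then (μ : ℂ) else (starRingEnd ℂ) (t i) with hw
    have hwn : w n = (μ : ℂ) := by simp [hw]
    have hwne : w ≠ 0 := by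
      intro h
      have h0 : w n = 0 := by rw [h]; rfl
      rw [hwn] at h0
      exact hμ0 (by exact_mod_cast h0)
    have hq' : ((μ : ℂ)) ^ 2 = (R n : ℂ) * (μ : ℂ) + ((S2 / 4 : ℝ) : ℂ) := by
      have := congrArg (fun x : ℝ => (x : ℂ)) hμq
      push_cast at this ⊢
      linear_combination this
    have hTw : T *ᵥ w = (μ : ℂ) • w := by
      funext i
      by_cases hi : i = n
      · rw [hi, hrown w, Pi.smul_apply, hwn, smul_eq_mul]
        have hsum' : ∑ j, t j * w j = ((S2 / 4 : ℝ) : ℂ) := by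
          rw [← hts]
          refine Finset.sum_congr rfl fun j _ => ?_
          by_cases hj : j = n
          · rw [hj, htn, zero_mul, zero_mul]
          · simp [hw, hj]
        rw [hsum']
        linear_combination -hq'
      · rw [hrow w i hi, Pi.smul_apply, hwn, smul_eq_mul]
        simp only [hw, if_neg hi]
        ring
    have hdet0 : (T - (μ : ℂ) • 1).det = 0 := by
      rw [← Matrix.exists_mulVec_eq_zero_iff]
      exact ⟨w, hwne, by
        rw [Matrix.sub_mulVec, hTw, Matrix.smul_mulVec, Matrix.one_mulVec, sub_self]⟩
    rw [aux_det_sub_smul_one hTh μ] at hdet0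
    obtain ⟨j, -, hj0⟩ := Finset.prod_eq_zero_iff.1 hdet0
    exact ⟨j, by exact_mod_cast sub_eq_zero.1 hj0⟩
  refine ⟨?_, hexists lamPos hlpne ((hquad lamPos).2 (Or.inl rfl)),
    hexists lamNeg hlnne ((hquad lamNeg).2 (Or.inr rfl)), hpos_ineq, hneg_ineq⟩
  intro m hm
  set μ := hTh.eigenvalues m with hμdef
  have hv := hTh.mulVec_eigenvectorBasis m
  set v : Fin N → ℂ := ⇑(hTh.eigenvectorBasis m) with hvdef
  have hvne : v ≠ 0 := by
    intro h
    exact hTh.eigenvectorBasis.orthonormal.ne_zero m (by ext i; exact congrFun h i)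
  have hsm : ∀ i, (T *ᵥ v) i = (μ : ℂ) * v i := by
    intro i
    rw [hv]
    simp [Pi.smul_apply, Complex.real_smul]
    exact Or.inl rfl
  have hvn : v n ≠ 0 := by
    intro h0
    apply hvne
    funext i
    by_cases hi : i = n
    · subst hi; simpa using h0
    · have h1 := hrow v i hi
      rw [hsm i, h0, mul_zero] at h1
      rcases mul_eq_zero.1 h1 with h | h
      · exact absurd (by exact_mod_cast h) hm
      · simpa using h
  have h1 : (μ : ℂ) * v n = (R n : ℂ) * v n + ∑ j, t j * v j := by
    rw [← hsm n, hrown v]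
  have h2 : ∀ j, j ≠ n → (μ : ℂ) * v j = (starRingEnd ℂ) (t j) * v n := by
    intro j hj; rw [← hsm j, hrow v j hj]
  have h3 : ∑ j, t j * ((μ : ℂ) * v j) = (∑ j, t j * (starRingEnd ℂ) (t j)) * v n := by
    rw [Finset.sum_mul]
    refine Finset.sum_congr rfl fun j _ => ?_
    by_cases hj : j = n
    · subst hj; rw [htn]; ring
    · rw [h2 j hj]; ring
  have h6 : (μ : ℂ) * ((μ : ℂ) * v n)
      = (μ : ℂ) * ((R n : ℂ) * v n) + ((S2 / 4 : ℝ) : ℂ) * v n := by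
    calc (μ : ℂ) * ((μ : ℂ) * v n)
        = (μ : ℂ) * ((R n : ℂ) * v n) + ∑ j, (μ : ℂ) * (t j * v j) := by
          rw [h1, mul_add, Finset.mul_sum]
      _ = (μ : ℂ) * ((R n : ℂ) * v n) + ∑ j, t j * ((μ : ℂ) * v j) := by
          exact congrArg _ (Finset.sum_congr rfl fun j _ => by ring)
      _ = (μ : ℂ) * ((R n : ℂ) * v n) + ((S2 / 4 : ℝ) : ℂ) * v n := by rw [h3, hts]
  have h7 : ((μ : ℂ) ^ 2 - (R n : ℂ) * μ - ((S2 / 4 : ℝ) : ℂ)) * v n = 0 := by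
    linear_combination h6
  have h8 : (μ : ℂ) ^ 2 - (R n : ℂ) * μ - ((S2 / 4 : ℝ) : ℂ) = 0 :=
    (mul_eq_zero.1 h7).resolve_right hvn
  have h9 : μ ^ 2 = R n * μ + S2 / 4 := by
    have h8' : ((μ ^ 2 : ℝ) : ℂ) = ((R n * μ + S2 / 4 : ℝ) : ℂ) := by
      push_cast at h8 ⊢
      linear_combination h8
    exact_mod_cast h8'
  exact (hquad μ).1 h9
end

section
/- The maximum achievable PTE η_max = U²/(1 + sqrt(1+U²))² with optimal load R_L* = z_o' sqrt(1+U²) is the maximum over R_L > 0 of the resonant PTE η_res(R_L) = [U²/(1 + R_L/z_o' + U²)] · [R_L/(R_L + z_o')]. -/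
/-- The maximum achievable PTE `η_max = U²/(1 + √(1+U²))²`, attained at the optimal
load `R_L⋆ = z_o' √(1+U²)`, is the maximum over `R_L > 0` of the resonant PTE
`η_res(R_L) = [U²/(1 + R_L/z_o' + U²)] · [R_L/(R_L + z_o')]`. -/
theorem optimal_load_maximizes_resonant_pte
    (zo U : ℝ) (hzo : 0 < zo) (hU : 0 < U)
    (ηres : ℝ → ℝ)
    (hη : ∀ RL, ηres RL = (U ^ 2 / (1 + RL / zo + U ^ 2)) * (RL / (RL + zo)))
    (RLstar : ℝ) (hRLstar : RLstar = zo * Real.sqrt (1 + U ^ 2)) :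
    ηres RLstar = U ^ 2 / (1 + Real.sqrt (1 + U ^ 2)) ^ 2 ∧
    ∀ RL > 0, ηres RL ≤ U ^ 2 / (1 + Real.sqrt (1 + U ^ 2)) ^ 2 := by
  set s := Real.sqrt (1 + U ^ 2) with hsdef
  have hsq : s ^ 2 = 1 + U ^ 2 := Real.sq_sqrt (by positivity)
  have hs1 : 1 < s := by
    nlinarith [Real.sqrt_nonneg (1 + U ^ 2)]
  have hs0 : 0 < s := by linarith
  constructor
  · rw [hη, hRLstar]
    have h1 : (0:ℝ) < 1 + zo * s / zo + U ^ 2 := by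
      have : zo * s / zo = s := by field_simp
      rw [this]; nlinarith
    have h2 : (0:ℝ) < zo * s + zo := by nlinarith
    field_simp
    linear_combination (1 + s) * hsq
  · intro RL hRL
    rw [hη]
    have h1 : (0:ℝ) < 1 + RL / zo + U ^ 2 := by positivity
    have h2 : (0:ℝ) < RL + zo := by linarith
    rw [div_mul_div_comm, div_le_div_iff₀ (by positivity) (by positivity)]
    have key : 0 ≤ (RL - zo * s) ^ 2 := sq_nonneg _
    have hzo' : zo ≠ 0 := ne_of_gt hzo
    field_simp
    have h4 : (zo + RL + U ^ 2 * zo) * (RL + zo) - RL * (1 + s) ^ 2 * zo = (RL - zo * s) ^ 2 := by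
      linear_combination (-(zo ^ 2 + RL * zo)) * hsq
    have h3 : U ^ 2 * ((zo + RL + U ^ 2 * zo) * (RL + zo)) - U ^ 2 * RL * (1 + s) ^ 2 * zo
        = U ^ 2 * (RL - zo * s) ^ 2 := by
      linear_combination (-(U ^ 2) * (zo ^ 2 + RL * zo)) * hsq
    nlinarith [mul_nonneg (sq_nonneg U) (sq_nonneg (RL - zo * s))]
end

section
/- If Z is a complex symmetric N×N matrix with positive definite real part, partitioned as Z = [[Z_t, z_tr],[z_tr^T, z_r]], then the minimum-loss output impedance z_o = z_r − z_tr^T (Z_t')^{-1} z_tr' has positive real part, and the mutual coupling quality factor U = sqrt(z_tr^H (Z_t')^{-1} z_tr / z_o') is a well-defined positive real number (provided z_tr ≠ 0). -/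
open Matrix

open Matrix

private lemma quad_re {N : ℕ} (A : Matrix (Fin N) (Fin N) ℝ) (v : Fin N → ℂ) :
    (star v ⬝ᵥ (A.map Complex.ofReal) *ᵥ v).re
      = (fun i => (v i).re) ⬝ᵥ A *ᵥ (fun i => (v i).re)
        + (fun i => (v i).im) ⬝ᵥ A *ᵥ (fun i => (v i).im) := by
  simp only [dotProduct, mulVec, Pi.star_apply, Matrix.map_apply, Finset.mul_sum,
    Complex.re_sum, ← Finset.sum_add_distrib]
  refine Finset.sum_congr rfl fun i _ => Finset.sum_congr rfl fun j _ => ?_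
  simp [Complex.mul_re]

private lemma quad_im {N : ℕ} (A : Matrix (Fin N) (Fin N) ℝ) (v : Fin N → ℂ) :
    (star v ⬝ᵥ (A.map Complex.ofReal) *ᵥ v).im
      = (fun i => (v i).re) ⬝ᵥ A *ᵥ (fun i => (v i).im)
        - (fun i => (v i).im) ⬝ᵥ A *ᵥ (fun i => (v i).re) := by
  simp only [dotProduct, mulVec, Pi.star_apply, Matrix.map_apply, Finset.mul_sum,
    Complex.im_sum, ← Finset.sum_sub_distrib]
  refine Finset.sum_congr rfl fun i _ => Finset.sum_congr rfl fun j _ => ?_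
  simp [Complex.mul_im]
  ring

private lemma symm_swap {N : ℕ} {A : Matrix (Fin N) (Fin N) ℝ} (hA : Aᵀ = A)
    (x y : Fin N → ℝ) : x ⬝ᵥ A *ᵥ y = y ⬝ᵥ A *ᵥ x := by
  rw [Matrix.dotProduct_mulVec, ← hA, Matrix.vecMul_transpose, hA, dotProduct_comm]

/-- If `Z` is a complex symmetric matrix with positive definite real part,
partitioned as `Z = [[Z_t, z_tr],[z_trᵀ, z_r]]` with `z_tr ≠ 0`, then the
minimum-loss output impedance `z_o = z_r − z_trᵀ (Z_t')⁻¹ z_tr'` has positive real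
part and the mutual coupling quality factor `U = √(z_trᴴ (Z_t')⁻¹ z_tr / z_o')` is a
well-defined positive real number. -/
theorem output_impedance_and_coupling_factor_pos
    {N : ℕ} (Zt : Matrix (Fin N) (Fin N) ℂ) (ztr : Fin N → ℂ) (zr : ℂ)
    (hZt : Zt.IsSymm) (hztr : ztr ≠ 0)
    (Z : Matrix (Fin N ⊕ Unit) (Fin N ⊕ Unit) ℂ)
    (hZ : Z = Matrix.fromBlocks Zt
        (Matrix.of fun i (_ : Unit) => ztr i)
        (Matrix.of fun (_ : Unit) j => ztr j)
        (Matrix.of fun (_ : Unit) (_ : Unit) => zr))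
    (hZpd : (Matrix.of fun i j => (Z i j).re : Matrix (Fin N ⊕ Unit) (Fin N ⊕ Unit) ℝ).PosDef)
    (Zt' : Matrix (Fin N) (Fin N) ℝ)
    (hZt' : Zt' = Matrix.of fun i j => (Zt i j).re)
    (zo : ℂ)
    (hzo : zo = zr - ztr ⬝ᵥ ((Zt'⁻¹).map (Complex.ofReal)) *ᵥ (fun i => ((ztr i).re : ℂ)))
    (U : ℝ)
    (hU : U = Real.sqrt ((star ztr ⬝ᵥ ((Zt'⁻¹).map (Complex.ofReal)) *ᵥ ztr).re / zo.re)) :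
    0 < zo.re ∧
    (star ztr ⬝ᵥ ((Zt'⁻¹).map (Complex.ofReal)) *ᵥ ztr).im = 0 ∧
    0 < U := by
  classical
  set a : Fin N → ℝ := fun i => (ztr i).re with ha
  set b : Fin N → ℝ := fun i => (ztr i).im with hb
  set B : Matrix (Fin N) Unit ℝ := Matrix.of (fun i (_ : Unit) => a i) with hB
  -- Zt' is symmetric
  have hZt'sym : Zt'.IsHermitian := by
    ext i j
    simp only [hZt', Matrix.conjTranspose_apply, Matrix.of_apply, star_trivial]
    rw [← hZt.apply i j]
  have hZt'symT : Zt'ᵀ = Zt' := hZt'sym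
  -- the real part of Z as a block matrix
  have Z'eq : (Matrix.of fun i j => (Z i j).re : Matrix (Fin N ⊕ Unit) (Fin N ⊕ Unit) ℝ)
      = Matrix.fromBlocks Zt' B Bᴴ (Matrix.of fun _ _ => zr.re) := by
    subst hZ hZt'
    ext i j
    cases i <;> cases j <;>
      simp [Matrix.fromBlocks, Matrix.conjTranspose_apply, hB, ha]
  -- Zt' is positive definite
  have hZt'pd : Zt'.PosDef := by
    refine PosDef.of_dotProduct_mulVec_pos hZt'sym fun x hx => ?_
    have hvne : Sum.elim x (0 : Unit → ℝ) ≠ 0 := by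
      intro h
      exact hx (funext fun i => congrFun h (Sum.inl i))
    have h1 := hZpd.dotProduct_mulVec_pos hvne
    rw [Z'eq] at h1
    simpa [Matrix.fromBlocks_mulVec, dotProduct, Fintype.sum_sum_type,
      Matrix.mulVec] using h1
  haveI : Invertible Zt' := hZt'pd.isUnit.invertible
  have hApd : (Zt'⁻¹).PosDef := hZt'pd.inv
  have hAsymT : (Zt'⁻¹)ᵀ = Zt'⁻¹ := hZt'sym.inv
  -- Schur complement positivity
  have hSchur : 0 < zr.re - a ⬝ᵥ Zt'⁻¹ *ᵥ a := by
    set y : Unit → ℝ := fun _ => 1 with hy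
    set x0 : Fin N → ℝ := -((Zt'⁻¹ * B) *ᵥ y) with hx0
    have hvne : Sum.elim x0 y ≠ 0 := by
      intro h
      have := congrFun h (Sum.inr ())
      simp [hy] at this
    have h1 := hZpd.dotProduct_mulVec_pos hvne
    rw [Z'eq, Matrix.dotProduct_mulVec,
      Matrix.schur_complement_eq₁₁ B (Matrix.of fun _ _ => zr.re) x0 y hZt'sym] at h1
    have h2 : x0 + (Zt'⁻¹ * B) *ᵥ y = 0 := by simp [hx0]
    rw [h2] at h1
    simp only [star_zero, Matrix.zero_vecMul, zero_dotProduct, zero_add] at h1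
    have h3 : star y ᵥ* ((Matrix.of fun (_:Unit) (_:Unit) => zr.re) - Bᴴ * Zt'⁻¹ * B) ⬝ᵥ y
        = zr.re - a ⬝ᵥ Zt'⁻¹ *ᵥ a := by
      simp [hy, Matrix.vecMul, dotProduct, Matrix.mul_apply, Matrix.mulVec, hB,
        Finset.mul_sum, Finset.sum_mul]
      rw [Finset.sum_comm]
      exact Finset.sum_congr rfl fun i _ => Finset.sum_congr rfl fun j _ => by ring
    rwa [h3] at h1
  -- compute zo.re
  have hmv : (Zt'⁻¹).map Complex.ofReal *ᵥ (fun i => ((ztr i).re : ℂ))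
      = fun i => ((Zt'⁻¹ *ᵥ a) i : ℂ) := by
    funext i
    simp only [Matrix.mulVec, dotProduct, Matrix.map_apply]
    push_cast
    rfl
  have hzore : zo.re = zr.re - a ⬝ᵥ Zt'⁻¹ *ᵥ a := by
    rw [hzo, Complex.sub_re, hmv]
    congr 1
    simp [dotProduct, Complex.re_sum, Complex.mul_re, ha]
  have hzo_pos : 0 < zo.re := hzore ▸ hSchur
  -- the quadratic form is positive
  have h0 : (fun i => (ztr i).re) ≠ (0 : Fin N → ℝ) ∨ (fun i => (ztr i).im) ≠ (0 : Fin N → ℝ) := by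
    by_contra h
    push_neg at h
    exact hztr (funext fun i => Complex.ext (congrFun h.1 i) (congrFun h.2 i))
  have hnn : ∀ v : Fin N → ℝ, 0 ≤ v ⬝ᵥ Zt'⁻¹ *ᵥ v := fun v => by
    simpa using hApd.posSemidef.dotProduct_mulVec_nonneg v
  have hpos : ∀ v : Fin N → ℝ, v ≠ 0 → 0 < v ⬝ᵥ Zt'⁻¹ *ᵥ v := fun v hv => by
    simpa using hApd.dotProduct_mulVec_pos hv
  have hrepos : 0 < (star ztr ⬝ᵥ (Zt'⁻¹).map Complex.ofReal *ᵥ ztr).re := by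
    rw [quad_re]
    rcases h0 with h | h
    · exact add_pos_of_pos_of_nonneg (hpos _ h) (hnn _)
    · exact add_pos_of_nonneg_of_pos (hnn _) (hpos _ h)
  have him : (star ztr ⬝ᵥ (Zt'⁻¹).map Complex.ofReal *ᵥ ztr).im = 0 := by
    rw [quad_im, symm_swap hAsymT, sub_self]
  exact ⟨hzo_pos, him, hU ▸ Real.sqrt_pos.mpr (div_pos hrepos hzo_pos)⟩
end
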